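/- Let f̄₁, f̄₂, v̄₁, v̄₂ > 0 with f̄₁ ≥ v̄₁ and f̄₂ ≥ v̄₂. Consider the quartic P(λ) = f̄₁λ⁴ + (3f̄₁ + 2v̄₁)λ³ + (2f̄₁ − 2f̄₂ + 4v̄₁ − 4v̄₂)λ² − (3f̄₂ + 2v̄₂)λ − f̄₂. Then P has exactly one positive real root. -/
import Mathlib


/-- The equilibrium quartic has exactly one positive real root. -/
theorem stmt_2 (f1 f2 v1 v2 : ℝ) (hf1 : 0 < f1) (hf2 : 0 < f2) (hv1 : 0 < v1) (hv2 : 0 < v2)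
    (h1 : v1 ≤ f1) (h2 : v2 ≤ f2) :
    ∃! lam : ℝ, 0 < lam ∧
      f1 * lam ^ 4 + (3 * f1 + 2 * v1) * lam ^ 3 + (2 * f1 - 2 * f2 + 4 * v1 - 4 * v2) * lam ^ 2
        - (3 * f2 + 2 * v2) * lam - f2 = 0 := by
  set P : ℝ → ℝ := fun lam => f1 * lam ^ 4 + (3 * f1 + 2 * v1) * lam ^ 3
      + (2 * f1 - 2 * f2 + 4 * v1 - 4 * v2) * lam ^ 2
      - (3 * f2 + 2 * v2) * lam - f2 with hPdef
  have key : ∀ a b : ℝ, 0 < a → a < b → P a = 0 → P b = 0 → False := by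
    intro a b ha hab hPa hPb
    have hb : 0 < b := lt_trans ha hab
    have hid : a ^ 2 * P b - b ^ 2 * P a
        = (b - a) * (f1 * a ^ 2 * b ^ 2 * (a + b) + (3 * f1 + 2 * v1) * a ^ 2 * b ^ 2
          + (3 * f2 + 2 * v2) * (a * b) + f2 * (a + b)) := by
      simp only [hPdef]; ring
    rw [hPa, hPb] at hid
    have hpos : 0 < (b - a) * (f1 * a ^ 2 * b ^ 2 * (a + b) + (3 * f1 + 2 * v1) * a ^ 2 * b ^ 2
          + (3 * f2 + 2 * v2) * (a * b) + f2 * (a + b)) := by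
      apply mul_pos (by linarith)
      positivity
    simp only [mul_zero, zero_mul, sub_zero] at hid
    linarith
  obtain ⟨M, hM1, hMf⟩ : ∃ M : ℝ, 1 ≤ M ∧ 6 * (f2 + v2) ≤ f1 * M := by
    refine ⟨6 * (f2 + v2) / f1 + 1, ?_, ?_⟩
    · have h : 0 ≤ 6 * (f2 + v2) / f1 := by positivity
      linarith
    · have h : f1 * (6 * (f2 + v2) / f1) = 6 * (f2 + v2) := by field_simp
      nlinarith
  have hM0 : (0 : ℝ) ≤ M := by linarith
  have hcont : ContinuousOn P (Set.Icc 0 M) := by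
    apply Continuous.continuousOn
    simp only [hPdef]
    fun_prop
  have hP0 : P 0 = -f2 := by simp [hPdef]
  have hPM : 0 ≤ P M := by
    have hM2 : 1 ≤ M ^ 2 := by nlinarith
    simp only [hPdef]
    nlinarith [sq_nonneg M, mul_pos hf1 hv1, mul_nonneg (mul_nonneg hM0 hM0) hM0,
      mul_le_mul_of_nonneg_right hMf (mul_nonneg (mul_nonneg hM0 hM0) hM0)]
  have hmem : (0 : ℝ) ∈ Set.Icc (P 0) (P M) := by
    constructor
    · rw [hP0]; linarith
    · exact hPM
  obtain ⟨c, hc, hPc⟩ := intermediate_value_Icc hM0 hcont hmem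
  have hcpos : 0 < c := by
    rcases lt_or_eq_of_le hc.1 with h | h
    · exact h
    · exfalso
      rw [← h] at hPc
      rw [hP0] at hPc
      linarith
  refine ⟨c, ⟨hcpos, hPc⟩, ?_⟩
  rintro b ⟨hbpos, hPb⟩
  by_contra hne
  rcases lt_or_gt_of_ne hne with h | h
  · exact key b c hbpos h hPb hPc
  · exact key c b hcpos h hPc hPb
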